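/- Let (a,b,c) : [0,∞) → ℝ³ be a differentiable curve with a(t) > 0, c(t) > 0 and a(t)² + b(t)² + c(t)² = 4 for all t ≥ 0, which solves the norm-preserving normalised gauged bracket Bach flow: (a,b,c)'(t) = F(a(t),b(t),c(t)) − (1/4)·⟨F(a(t),b(t),c(t)), (a(t),b(t),c(t))⟩·(a(t),b(t),c(t)), where ⟨·,·⟩ is the Euclidean inner product on ℝ³. Then (a(t), b(t), c(t)) converges to (√2, 0, √2) as t → ∞. -/

import Mathlib

/-- First component of the right-hand side `F` of the gauged bracket Bach flow. -/
noncomputable def Fa (a b c : ℝ) : ℝ :=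
  -(a / 48) * (44*a^4 + 72*a^2*b^2 - 5*a^2*c^2 + 28*b^4 + 24*b^2*c^2 - 4*c^4)

/-- Second component of the right-hand side `F` of the gauged bracket Bach flow. -/
noncomputable def Fb (a b c : ℝ) : ℝ :=
  -(b / 48) * (60*a^4 + 104*a^2*b^2 + 57*a^2*c^2 + 44*b^4 + 104*b^2*c^2 + 60*c^4)

/-- Third component of the right-hand side `F` of the gauged bracket Bach flow. -/
noncomputable def Fc (a b c : ℝ) : ℝ :=
  -(c / 48) * (-4*a^4 + 24*a^2*b^2 - 5*a^2*c^2 + 28*b^4 + 72*b^2*c^2 + 44*c^4)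

/-- `(a,b,c) : ℝ → ℝ³` is a differentiable solution of the gauged bracket Bach
flow on the set `S ⊆ ℝ`. -/
def IsBachFlowSolution (a b c : ℝ → ℝ) (S : Set ℝ) : Prop :=
  ∀ t ∈ S,
    HasDerivAt a (Fa (a t) (b t) (c t)) t ∧
    HasDerivAt b (Fb (a t) (b t) (c t)) t ∧
    HasDerivAt c (Fc (a t) (b t) (c t)) t

/-! ### Auxiliary polynomials -/

/-- `⟨F(a,b,c),(a,b,c)⟩ = -Qb(a²,b²,c²)/48`. -/
def Qb (x y z : ℝ) : ℝ :=
  44*(x^3+y^3+z^3)+132*(x^2*y+x*y^2+y^2*z+y*z^2)-9*(x^2*z+x*z^2)+105*(x*y*z)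

def Pby (x y z : ℝ) : ℝ := 60*x^2+104*x*y+57*x*z+44*y^2+104*y*z+60*z^2
def Pac (x y z : ℝ) : ℝ := 40*x^2+96*x*y-10*x*z+56*y^2+96*y*z+40*z^2
def Pu (x y z : ℝ) : ℝ := 44*(x^2+x*z+z^2)+72*y*(x+z)-x*z+28*y^2

/-! ### Ring identities for the derivatives of `b²`, `a²-c²`, `a²c²`. -/

lemma id_y (A B C : ℝ) :
    2*B*(Fb A B C - (1/4) * (Fa A B C * A + Fb A B C * B + Fc A B C * C) * B)
      = B^2 * (Qb (A^2) (B^2) (C^2) - 4 * Pby (A^2) (B^2) (C^2)) / 96 := by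
  simp only [Fa, Fb, Fc, Qb, Pby]; ring

lemma id_u (A B C : ℝ) :
    2*A*(Fa A B C - (1/4) * (Fa A B C * A + Fb A B C * B + Fc A B C * C) * A)
      - 2*C*(Fc A B C - (1/4) * (Fa A B C * A + Fb A B C * B + Fc A B C * C) * C)
      = (A^2 - C^2) * (Qb (A^2) (B^2) (C^2) - 4 * Pu (A^2) (B^2) (C^2)) / 96 := by
  simp only [Fa, Fb, Fc, Qb, Pu]; ring

lemma id_w (A B C : ℝ) :
    (2*A*(Fa A B C - (1/4) * (Fa A B C * A + Fb A B C * B + Fc A B C * C) * A)) * C^2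
      + A^2 * (2*C*(Fc A B C - (1/4) * (Fa A B C * A + Fb A B C * B + Fc A B C * C) * C))
      = A^2 * C^2 * (2 * Qb (A^2) (B^2) (C^2) - 4 * Pac (A^2) (B^2) (C^2)) / 96 := by
  simp only [Fa, Fb, Fc, Qb, Pac]; ring

/-! ### Algebraic inequalities on the sphere `x + y + z = 4`, `x, y, z ≥ 0`. -/

lemma alg0 (x y z : ℝ) (hx : 0 ≤ x) (hy : 0 ≤ y) (hz : 0 ≤ z) (hs : x + y + z = 4) :
    Qb x y z - 4 * Pby x y z ≤ 0 := by
  have e : Qb x y z - 4 * Pby x y z =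
      -(16*x^3+32*x^2*y+126*x^2*z+16*x*y^2+160*x*y*z+126*x*z^2+16*y^2*z+32*y*z^2+16*z^3) := by
    simp only [Qb, Pby]
    linear_combination (60*x^2+104*x*y+57*x*z+44*y^2+104*y*z+60*z^2) * hs
  rw [e]
  nlinarith [mul_nonneg (mul_nonneg hx hx) hx, mul_nonneg (mul_nonneg hx hx) hy,
    mul_nonneg (mul_nonneg hx hx) hz, mul_nonneg (mul_nonneg hx hy) hy,
    mul_nonneg (mul_nonneg hx hy) hz, mul_nonneg (mul_nonneg hx hz) hz,
    mul_nonneg (mul_nonneg hy hy) hz, mul_nonneg (mul_nonneg hy hz) hz,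
    mul_nonneg (mul_nonneg hz hz) hz]

lemma alg1 (x y z y0 : ℝ) (hx : 0 ≤ x) (hy : 0 ≤ y) (hz : 0 ≤ z) (hs : x + y + z = 4)
    (hyy0 : y ≤ y0) (hy04 : y0 ≤ 4) :
    Qb x y z - 4 * Pby x y z ≤ -4 * (4 - y0)^3 := by
  have e : Qb x y z - 4 * Pby x y z =
      -(16*x^3+32*x^2*y+126*x^2*z+16*x*y^2+160*x*y*z+126*x*z^2+16*y^2*z+32*y*z^2+16*z^3) := by
    simp only [Qb, Pby]
    linear_combination (60*x^2+104*x*y+57*x*z+44*y^2+104*y*z+60*z^2) * hs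
  rw [e]
  have hxz : x + z = 4 - y := by linarith
  have h1 : 0 ≤ (x + z) * (x - z)^2 := by positivity
  have hA : (0:ℝ) ≤ 4 - y0 := by linarith
  have hB : (0:ℝ) ≤ 4 - y := by linarith
  have h2 : 0 ≤ (y0 - y) * ((4-y)^2 + (4-y)*(4-y0) + (4-y0)^2) :=
    mul_nonneg (by linarith) (by nlinarith [mul_nonneg hB hA, sq_nonneg (4-y), sq_nonneg (4-y0)])
  nlinarith [mul_nonneg (mul_nonneg hx hx) hy, mul_nonneg (mul_nonneg hx hx) hz,
    mul_nonneg (mul_nonneg hx hy) hy, mul_nonneg (mul_nonneg hx hy) hz,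
    mul_nonneg (mul_nonneg hx hz) hz, mul_nonneg (mul_nonneg hy hy) hz,
    mul_nonneg (mul_nonneg hy hz) hz]

lemma alg2 (x y z : ℝ) (hx : 0 ≤ x) (hy : 0 ≤ y) (hz : 0 ≤ z) (hs : x + y + z = 4) :
    0 ≤ 2 * Qb x y z - 4 * Pac x y z := by
  have e : 2 * Qb x y z - 4 * Pac x y z =
      48*(x+z)*(x-z)^2 + y*(32*y^2+128*x^2+112*x*y+112*y*z+128*z^2+28*x*z) := by
    simp only [Qb, Pac]
    linear_combination (40*x^2+96*x*y-10*x*z+56*y^2+96*y*z+40*z^2) * hs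
  rw [e]
  have h1 : 0 ≤ 48*(x+z)*(x-z)^2 := by positivity
  nlinarith [mul_nonneg (mul_nonneg hx hx) hy, mul_nonneg (mul_nonneg hx hy) hy,
    mul_nonneg (mul_nonneg hy hy) hy, mul_nonneg (mul_nonneg hy hy) hz,
    mul_nonneg (mul_nonneg hy hz) hz, mul_nonneg (mul_nonneg hx hy) hz]

lemma alg3 (x y z y0 w0 : ℝ) (hx : 0 ≤ x) (hy : 0 ≤ y) (hz : 0 ≤ z) (hs : x + y + z = 4)
    (hyy0 : y ≤ y0) (hy04 : y0 ≤ 4) (hw0 : w0 ≤ x * z) :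
    Qb x y z - 4 * Pu x y z ≤ -96 * w0 * (4 - y0) + 1280 * y := by
  have e : Qb x y z - 4 * Pu x y z =
      -(96*(x*z)*(x+z) + 82*(x*y*z) - 16*y^3 - 16*y*(x^2+z^2) - 32*y^2*(x+z)) := by
    simp only [Qb, Pu]
    linear_combination (44*(x^2+x*z+z^2)+72*y*(x+z)-x*z+28*y^2) * hs
  rw [e]
  have hx4 : x ≤ 4 := by linarith
  have hz4 : z ≤ 4 := by linarith
  have hy4 : y ≤ 4 := by linarith
  have hxz : x + z = 4 - y := by linarith
  have h1 : 0 ≤ (x*z - w0) * (4 - y0) := mul_nonneg (by linarith) (by linarith)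
  have h2 : 0 ≤ (x*z) * (y0 - y) := mul_nonneg (mul_nonneg hx hz) (by linarith)
  have hx2 : x^2 ≤ 16 := by nlinarith
  have hz2 : z^2 ≤ 16 := by nlinarith
  have hy2 : y^2 ≤ 16 := by nlinarith
  have h3 : y^3 ≤ 16*y := by nlinarith [mul_nonneg hy (sub_nonneg.mpr hy2)]
  have h4 : y*(x^2+z^2) ≤ 32*y := by
    nlinarith [mul_nonneg hy (sub_nonneg.mpr hx2), mul_nonneg hy (sub_nonneg.mpr hz2)]
  have h5 : y^2*(x+z) ≤ 16*y := by
    nlinarith [mul_nonneg (mul_nonneg hy hy) (sub_nonneg.mpr (show x+z ≤ 4 by linarith)),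
      mul_nonneg hy (sub_nonneg.mpr (show y*4 ≤ 16 by linarith))]
  have e2 : 96*(x*z)*(x+z) = 96*w0*(4-y0) + 96*(x*z-w0)*(4-y0) + 96*(x*z)*(y0-y) := by
    linear_combination (96*(x*z))*hxz
  nlinarith [mul_nonneg (mul_nonneg hx hy) hz]

/-! ### Monotonicity helpers -/

lemma antitoneOn_Ici_of_hasDerivAt {f f' : ℝ → ℝ} {T : ℝ}
    (hf : ∀ t ∈ Set.Ici T, HasDerivAt f (f' t) t)
    (h0 : ∀ t ∈ Set.Ici T, f' t ≤ 0) : AntitoneOn f (Set.Ici T) := by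
  apply antitoneOn_of_deriv_nonpos (convex_Ici T)
  · exact fun t ht => (hf t ht).continuousAt.continuousWithinAt
  · intro t ht
    rw [interior_Ici] at ht
    exact ((hf t (Set.mem_Ici.mpr (le_of_lt (Set.mem_Ioi.mp ht)))).differentiableAt).differentiableWithinAt
  · intro t ht
    rw [interior_Ici] at ht
    rw [(hf t (Set.mem_Ici.mpr (le_of_lt (Set.mem_Ioi.mp ht)))).deriv]
    exact h0 t (Set.mem_Ici.mpr (le_of_lt (Set.mem_Ioi.mp ht)))

lemma monotoneOn_Ici_of_hasDerivAt {f f' : ℝ → ℝ} {T : ℝ}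
    (hf : ∀ t ∈ Set.Ici T, HasDerivAt f (f' t) t)
    (h0 : ∀ t ∈ Set.Ici T, 0 ≤ f' t) : MonotoneOn f (Set.Ici T) := by
  apply monotoneOn_of_deriv_nonneg (convex_Ici T)
  · exact fun t ht => (hf t ht).continuousAt.continuousWithinAt
  · intro t ht
    rw [interior_Ici] at ht
    exact ((hf t (Set.mem_Ici.mpr (le_of_lt (Set.mem_Ioi.mp ht)))).differentiableAt).differentiableWithinAt
  · intro t ht
    rw [interior_Ici] at ht
    rw [(hf t (Set.mem_Ici.mpr (le_of_lt (Set.mem_Ioi.mp ht)))).deriv]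
    exact h0 t (Set.mem_Ici.mpr (le_of_lt (Set.mem_Ioi.mp ht)))

set_option maxHeartbeats 1000000 in
/-- convergence of the norm-preserving normalised gauged bracket
Bach flow. If `(a,b,c) : [0,∞) → ℝ³` has `a > 0`, `c > 0`, constant squared norm
`a² + b² + c² = 4`, and solves
`(a,b,c)' = F(a,b,c) − (1/4)·⟨F(a,b,c),(a,b,c)⟩·(a,b,c)`,
then `(a(t), b(t), c(t)) → (√2, 0, √2)` as `t → ∞`. -/
theorem normalised_flow_convergence (a b c : ℝ → ℝ)
    (ha : ∀ t : ℝ, 0 ≤ t → 0 < a t) (hc : ∀ t : ℝ, 0 ≤ t → 0 < c t)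
    (hnorm : ∀ t : ℝ, 0 ≤ t → a t ^ 2 + b t ^ 2 + c t ^ 2 = 4)
    (hode : ∀ t : ℝ, 0 ≤ t →
      HasDerivAt a (Fa (a t) (b t) (c t) -
        (1/4) * (Fa (a t) (b t) (c t) * a t + Fb (a t) (b t) (c t) * b t +
          Fc (a t) (b t) (c t) * c t) * a t) t ∧
      HasDerivAt b (Fb (a t) (b t) (c t) -
        (1/4) * (Fa (a t) (b t) (c t) * a t + Fb (a t) (b t) (c t) * b t +
          Fc (a t) (b t) (c t) * c t) * b t) t ∧
      HasDerivAt c (Fc (a t) (b t) (c t) -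
        (1/4) * (Fa (a t) (b t) (c t) * a t + Fb (a t) (b t) (c t) * b t +
          Fc (a t) (b t) (c t) * c t) * c t) t) :
    Filter.Tendsto a Filter.atTop (nhds (Real.sqrt 2)) ∧
    Filter.Tendsto b Filter.atTop (nhds 0) ∧
    Filter.Tendsto c Filter.atTop (nhds (Real.sqrt 2)) := by
  -- abbreviations for the squared coordinates
  set x : ℝ → ℝ := fun t => a t ^ 2 with hxdef
  set y : ℝ → ℝ := fun t => b t ^ 2 with hydef
  set z : ℝ → ℝ := fun t => c t ^ 2 with hzdef
  have hx0 : ∀ t, 0 ≤ x t := fun t => sq_nonneg _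
  have hy0' : ∀ t, 0 ≤ y t := fun t => sq_nonneg _
  have hz0 : ∀ t, 0 ≤ z t := fun t => sq_nonneg _
  have hsum : ∀ t ∈ Set.Ici (0:ℝ), x t + y t + z t = 4 := fun t ht => hnorm t ht
  -- derivative of y = b²
  have hy' : ∀ t ∈ Set.Ici (0:ℝ), HasDerivAt y
      (y t * (Qb (x t) (y t) (z t) - 4 * Pby (x t) (y t) (z t)) / 96) t := by
    intro t ht
    have h := ((hode t ht).2.1).pow 2
    refine h.congr_deriv ?_
    rw [← id_y (a t) (b t) (c t)]
    push_cast
    ring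
  -- derivative of u = a² - c²
  have hu' : ∀ t ∈ Set.Ici (0:ℝ), HasDerivAt (fun s => x s - z s)
      ((x t - z t) * (Qb (x t) (y t) (z t) - 4 * Pu (x t) (y t) (z t)) / 96) t := by
    intro t ht
    have h := (((hode t ht).1).pow 2).sub (((hode t ht).2.2).pow 2)
    refine h.congr_deriv ?_
    rw [← id_u (a t) (b t) (c t)]
    push_cast
    ring
  -- derivative of w = a²c²
  have hw' : ∀ t ∈ Set.Ici (0:ℝ), HasDerivAt (fun s => x s * z s)
      (x t * z t * (2 * Qb (x t) (y t) (z t) - 4 * Pac (x t) (y t) (z t)) / 96) t := by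
    intro t ht
    have h := (((hode t ht).1).pow 2).mul (((hode t ht).2.2).pow 2)
    refine h.congr_deriv ?_
    rw [← id_w (a t) (b t) (c t)]
    simp only [Pi.pow_apply]
    push_cast
    ring
  -- initial data
  have ha0 := ha 0 le_rfl
  have hc0 := hc 0 le_rfl
  have hn0 := hnorm 0 le_rfl
  set y0 : ℝ := y 0 with hy0def
  have h4y0 : 0 < 4 - y0 := by
    have : y0 = 4 - a 0 ^ 2 - c 0 ^ 2 := by simp only [hy0def, hydef]; linarith
    nlinarith [pow_pos ha0 2, pow_pos hc0 2]
  have hy04 : y0 ≤ 4 := by linarith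
  -- Step A : y is antitone on [0,∞)
  have hyanti : AntitoneOn y (Set.Ici 0) := by
    apply antitoneOn_Ici_of_hasDerivAt hy'
    intro t ht
    have h0 := alg0 (x t) (y t) (z t) (hx0 t) (hy0' t) (hz0 t) (hsum t ht)
    have := hy0' t
    nlinarith
  have hyy0 : ∀ t ∈ Set.Ici (0:ℝ), y t ≤ y0 := fun t ht =>
    hyanti (Set.self_mem_Ici) ht ht
  -- Step B : exponential decay of y
  set k0 : ℝ := (4 - y0)^3 / 24 with hk0def
  have hk0 : 0 < k0 := by positivity
  have hexp : ∀ k : ℝ, ∀ t : ℝ, HasDerivAt (fun s => Real.exp (k*s)) (Real.exp (k*t) * k) t := by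
    intro k t
    simpa using ((hasDerivAt_id t).const_mul k).exp
  have hhanti : AntitoneOn (fun s => y s * Real.exp (k0 * s)) (Set.Ici 0) := by
    apply antitoneOn_Ici_of_hasDerivAt
      (f' := fun t => (y t * (Qb (x t) (y t) (z t) - 4 * Pby (x t) (y t) (z t)) / 96)
        * Real.exp (k0 * t) + y t * (Real.exp (k0 * t) * k0))
    · exact fun t ht => (hy' t ht).mul (hexp k0 t)
    · intro t ht
      have h1 := alg1 (x t) (y t) (z t) y0 (hx0 t) (hy0' t) (hz0 t) (hsum t ht)
        (hyy0 t ht) hy04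
      have hDy : y t * (Qb (x t) (y t) (z t) - 4 * Pby (x t) (y t) (z t)) / 96 ≤ -k0 * y t := by
        have := mul_le_mul_of_nonneg_left h1 (hy0' t)
        rw [hk0def]
        nlinarith
      have hE := Real.exp_pos (k0 * t)
      linarith [mul_nonneg hE.le (show 0 ≤ -(y t * (Qb (x t) (y t) (z t)
        - 4 * Pby (x t) (y t) (z t)) / 96 + k0 * y t) by linarith)]
  have hydecay : ∀ t ∈ Set.Ici (0:ℝ), y t ≤ y0 * Real.exp (-(k0 * t)) := by
    intro t ht
    have h := hhanti Set.self_mem_Ici ht ht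
    simp only [mul_zero, Real.exp_zero, mul_one] at h
    have hE := Real.exp_pos (k0 * t)
    rw [show y0 * Real.exp (-(k0*t)) = y0 / Real.exp (k0*t) by
      rw [Real.exp_neg]; ring, le_div_iff₀ hE]
    exact h
  have hbound0 : Filter.Tendsto (fun t => y0 * Real.exp (-(k0 * t)))
      Filter.atTop (nhds 0) := by
    have h1 : Filter.Tendsto (fun t : ℝ => k0 * t) Filter.atTop Filter.atTop :=
      Filter.Tendsto.const_mul_atTop hk0 Filter.tendsto_id
    have h2 := Real.tendsto_exp_neg_atTop_nhds_zero.comp h1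
    have h3 := h2.const_mul y0
    simpa using h3
  have hylim : Filter.Tendsto y Filter.atTop (nhds 0) := by
    apply squeeze_zero' (Filter.Eventually.of_forall hy0')
      ?_ hbound0
    filter_upwards [Filter.eventually_ge_atTop (0:ℝ)] with t ht
    exact hydecay t ht
  -- Step C : w = a²c² is monotone, hence bounded below by w0 > 0
  set w0 : ℝ := x 0 * z 0 with hw0def
  have hw0 : 0 < w0 := by
    simp only [hw0def, hxdef, hzdef]
    positivity
  have hwmono : MonotoneOn (fun s => x s * z s) (Set.Ici 0) := by
    apply monotoneOn_Ici_of_hasDerivAt hw'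
    intro t ht
    have h2 := alg2 (x t) (y t) (z t) (hx0 t) (hy0' t) (hz0 t) (hsum t ht)
    have := mul_nonneg (hx0 t) (hz0 t)
    positivity
  have hwlb : ∀ t ∈ Set.Ici (0:ℝ), w0 ≤ x t * z t := fun t ht =>
    hwmono Set.self_mem_Ici ht ht
  -- Step D : choice of the time T after which y is small
  set δ : ℝ := 48 * w0 * (4 - y0) with hδdef
  have hδ : 0 < δ := by positivity
  set ε : ℝ := δ / 1280 with hεdef
  have hε : 0 < ε := by positivity
  have hev : ∀ᶠ t in Filter.atTop, y t < ε ∧ (0:ℝ) ≤ t := by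
    filter_upwards [hylim.eventually_lt_const hε, Filter.eventually_ge_atTop (0:ℝ)] with t h1 h2
    exact ⟨h1, h2⟩
  obtain ⟨T, hT⟩ := Filter.eventually_atTop.mp hev
  have hT0 : (0:ℝ) ≤ T := (hT T le_rfl).2
  -- Step E : decay of u² = (a²-c²)²
  set κ : ℝ := δ / 48 with hκdef
  have hκ : 0 < κ := by positivity
  have hganti : AntitoneOn (fun s => (x s - z s)^2 * Real.exp (κ * s)) (Set.Ici T) := by
    apply antitoneOn_Ici_of_hasDerivAt
      (f' := fun t => (2 * (x t - z t) * ((x t - z t) *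
          (Qb (x t) (y t) (z t) - 4 * Pu (x t) (y t) (z t)) / 96)) * Real.exp (κ * t)
        + (x t - z t)^2 * (Real.exp (κ * t) * κ))
    · intro t ht
      have h1 := ((hu' t (Set.mem_Ici.mpr (hT0.trans ht))).pow 2).mul (hexp κ t)
      refine h1.congr_deriv ?_
      simp only [Pi.pow_apply]
      push_cast
      ring
    · intro t ht
      have htT : T ≤ t := ht
      have ht0 : (0:ℝ) ≤ t := hT0.trans htT
      have hyε : y t ≤ ε := (hT t htT).1.le
      have h3 := alg3 (x t) (y t) (z t) y0 w0 (hx0 t) (hy0' t) (hz0 t)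
        (hsum t ht0) (hyy0 t ht0) hy04 (hwlb t ht0)
      -- Q - 4Pu ≤ -δ
      have hQ : Qb (x t) (y t) (z t) - 4 * Pu (x t) (y t) (z t) ≤ -δ := by
        have h5 : 1280 * y t ≤ 1280 * ε := by linarith
        rw [hεdef, hδdef] at h5
        rw [hδdef]
        linarith
      have hkey : 2 * (x t - z t) * ((x t - z t) *
          (Qb (x t) (y t) (z t) - 4 * Pu (x t) (y t) (z t)) / 96) ≤ -κ * (x t - z t)^2 := by
        have hsq : 0 ≤ (x t - z t)^2 := sq_nonneg _
        have := mul_le_mul_of_nonneg_left hQ hsq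
        rw [hκdef]
        nlinarith
      have hE := Real.exp_pos (κ * t)
      linarith [mul_nonneg hE.le (show 0 ≤ -(2 * (x t - z t) * ((x t - z t) *
          (Qb (x t) (y t) (z t) - 4 * Pu (x t) (y t) (z t)) / 96) + κ * (x t - z t)^2)
        by linarith)]
  set C : ℝ := (x T - z T)^2 * Real.exp (κ * T) with hCdef
  have hu2dec : ∀ t ∈ Set.Ici T, (x t - z t)^2 ≤ C * Real.exp (-(κ * t)) := by
    intro t ht
    have h := hganti Set.self_mem_Ici ht ht
    have hE := Real.exp_pos (κ * t)
    rw [show C * Real.exp (-(κ*t)) = C / Real.exp (κ*t) by rw [Real.exp_neg]; ring,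
      le_div_iff₀ hE]
    exact h
  have hboundu : Filter.Tendsto (fun t => C * Real.exp (-(κ * t)))
      Filter.atTop (nhds 0) := by
    have h1 : Filter.Tendsto (fun t : ℝ => κ * t) Filter.atTop Filter.atTop :=
      Filter.Tendsto.const_mul_atTop hκ Filter.tendsto_id
    have h2 := Real.tendsto_exp_neg_atTop_nhds_zero.comp h1
    have h3 := h2.const_mul C
    simpa using h3
  have hu2lim : Filter.Tendsto (fun t => (x t - z t)^2) Filter.atTop (nhds 0) := by
    apply squeeze_zero' (Filter.Eventually.of_forall fun t => sq_nonneg _) ?_ hboundu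
    filter_upwards [Filter.eventually_ge_atTop T] with t ht
    exact hu2dec t ht
  -- From u² → 0 deduce u → 0
  have hulim : Filter.Tendsto (fun t => x t - z t) Filter.atTop (nhds 0) := by
    rw [tendsto_zero_iff_abs_tendsto_zero]
    have h := (Real.continuous_sqrt.tendsto 0).comp hu2lim
    simp only [Real.sqrt_zero] at h
    refine h.congr fun t => ?_
    simp [Function.comp, Real.sqrt_sq_eq_abs]
  -- b → 0
  have hblim : Filter.Tendsto b Filter.atTop (nhds 0) := by
    rw [tendsto_zero_iff_abs_tendsto_zero]
    have h := (Real.continuous_sqrt.tendsto 0).comp hylim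
    simp only [Real.sqrt_zero] at h
    refine h.congr fun t => ?_
    simp [Function.comp, hydef, Real.sqrt_sq_eq_abs]
  -- x → 2 and z → 2
  have hxlim : Filter.Tendsto x Filter.atTop (nhds 2) := by
    have h1 : Filter.Tendsto (fun t => (4 - y t + (x t - z t)) / 2)
        Filter.atTop (nhds 2) := by
      have := ((tendsto_const_nhds (x := (4:ℝ)) (f := Filter.atTop)).sub hylim).add hulim
      have h2 := this.div_const 2
      norm_num at h2
      exact h2
    apply h1.congr'
    filter_upwards [Filter.eventually_ge_atTop (0:ℝ)] with t ht
    have := hsum t ht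
    linarith
  have hzlim : Filter.Tendsto z Filter.atTop (nhds 2) := by
    have h1 : Filter.Tendsto (fun t => (4 - y t - (x t - z t)) / 2)
        Filter.atTop (nhds 2) := by
      have := ((tendsto_const_nhds (x := (4:ℝ)) (f := Filter.atTop)).sub hylim).sub hulim
      have h2 := this.div_const 2
      norm_num at h2
      exact h2
    apply h1.congr'
    filter_upwards [Filter.eventually_ge_atTop (0:ℝ)] with t ht
    have := hsum t ht
    linarith
  -- conclude
  refine ⟨?_, hblim, ?_⟩
  · have h := (Real.continuous_sqrt.tendsto 2).comp hxlim
    apply h.congr'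
    filter_upwards [Filter.eventually_ge_atTop (0:ℝ)] with t ht
    simp only [Function.comp, hxdef]
    exact Real.sqrt_sq (ha t ht).le
  · have h := (Real.continuous_sqrt.tendsto 2).comp hzlim
    apply h.congr'
    filter_upwards [Filter.eventually_ge_atTop (0:ℝ)] with t ht
    simp only [Function.comp, hzdef]
    exact Real.sqrt_sq (hc t ht).le
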